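/- Let G be a finite flag-transitive automorphism group of a 2-(v,k,λ) design with 2 ≤ k in which every point lies in exactly r blocks, and suppose gcd(r,λ) = 1. Then for any two distinct points α and β, r divides the length of the orbit of β under the stabilizer G_α; that is, r divides every non-trivial subdegree of G. -/
import Mathlib


open Pointwise

/-- If G is a finite flag-transitive automorphism group of a 2-(v,k,λ) design
with 2 ≤ k and gcd(r,λ) = 1, then for any two distinct points α, β, r divides
the length of the orbit of β under the stabilizer G_α, i.e. r divides every
non-trivial subdegree of G. -/
theorem stmt_5 {P : Type*} [Fintype P] [DecidableEq P]
    (v r k lam : ℕ) (𝓑 : Finset (Finset P))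
    (hv : Fintype.card P = v)
    (hk : ∀ B ∈ 𝓑, B.card = k)
    (hk2 : 2 ≤ k)
    (hlam1 : 1 ≤ lam)
    (hlam : ∀ x y : P, x ≠ y → (𝓑.filter (fun B => x ∈ B ∧ y ∈ B)).card = lam)
    (hr : ∀ x : P, (𝓑.filter (fun B => x ∈ B)).card = r)
    (hcop : Nat.gcd r lam = 1)
    {G : Type*} [Group G] [Finite G] [MulAction G P]
    (hG : ∀ (g : G), ∀ B ∈ 𝓑, g • B ∈ 𝓑)
    (hft : ∀ B₁ ∈ 𝓑, ∀ B₂ ∈ 𝓑, ∀ α₁ ∈ B₁, ∀ α₂ ∈ B₂,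
      ∃ g : G, g • α₁ = α₂ ∧ g • B₁ = B₂)
    (α β : P) (hαβ : α ≠ β) :
    r ∣ Nat.card (MulAction.orbit (MulAction.stabilizer G α) β) := by
  classical
  set H := MulAction.stabilizer G α with hH
  set O : Set P := MulAction.orbit H β with hO
  -- the orbit as a finset
  set Δ : Finset P := Finset.univ.filter (fun x => x ∈ O) with hΔ
  have hmemΔ : ∀ x, x ∈ Δ ↔ x ∈ O := by
    intro x; simp [hΔ]
  -- orbit is invariant under stabilizer elements
  have hinv : ∀ g : G, g • α = α → ∀ x ∈ O, g • x ∈ O := by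
    intro g hg x hx
    obtain ⟨h, rfl⟩ := hx
    exact ⟨(⟨g, hg⟩ : H) * h, by show (g * (h:G)) • β = g • ((h:G) • β); exact mul_smul _ _ _⟩
  have hΔinv : ∀ g : G, g • α = α → g • Δ = Δ := by
    intro g hg
    ext x
    simp only [Finset.mem_smul_finset, hmemΔ]
    constructor
    · rintro ⟨y, hy, rfl⟩; exact hinv g hg y hy
    · intro hx
      refine ⟨g⁻¹ • x, hinv g⁻¹ (by rw [inv_smul_eq_iff, hg]) x hx, by simp⟩
  -- α is not in the orbit
  have hαΔ : α ∉ Δ := by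
    rw [hmemΔ]
    rintro ⟨h, hh⟩
    have hh' : (h : G) • β = α := hh
    have h2 : (h : G) • α = α := h.2
    exact hαβ (MulAction.injective (h : G) (hh'.trans h2.symm)).symm
  -- blocks through α
  set S : Finset (Finset P) := 𝓑.filter (fun B => α ∈ B) with hS
  have hScard : S.card = r := hr α
  -- double count
  have hcount : ∀ B ∈ S, (Δ ∩ B).card = ∑ γ ∈ Δ, if γ ∈ B then 1 else 0 := by
    intro B _
    rw [show Δ ∩ B = Δ.filter (fun γ => γ ∈ B) by
      ext x; simp [Finset.mem_filter, Finset.mem_inter]]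
    exact Finset.card_filter _ _
  have hdouble : ∑ B ∈ S, (Δ ∩ B).card = Δ.card * lam := by
    rw [Finset.sum_congr rfl hcount, Finset.sum_comm]
    have : ∀ γ ∈ Δ, (∑ B ∈ S, if γ ∈ B then 1 else 0) = lam := by
      intro γ hγ
      have hγα : α ≠ γ := by
        rintro rfl; exact hαΔ hγ
      rw [← Finset.card_filter, hS, Finset.filter_filter]
      exact hlam α γ hγα
    rw [Finset.sum_congr rfl this, Finset.sum_const, smul_eq_mul, mul_comm]
  -- S is nonempty
  have hlamle : lam ≤ r := by
    rw [← hr α, ← hlam α β hαβ]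
    apply Finset.card_le_card
    intro B hB
    simp only [Finset.mem_filter] at hB ⊢
    exact ⟨hB.1, hB.2.1⟩
  have hSne : S.Nonempty := by
    rw [← Finset.card_pos, hScard]; omega
  obtain ⟨B₀, hB₀⟩ := hSne
  -- constancy of |Δ ∩ B| over B ∈ S
  have hconst : ∀ B ∈ S, (Δ ∩ B).card = (Δ ∩ B₀).card := by
    intro B hB
    simp only [hS, Finset.mem_filter] at hB hB₀
    obtain ⟨g, hgα, hgB⟩ := hft B hB.1 B₀ hB₀.1 α hB.2 α hB₀.2
    have : g • (Δ ∩ B) = Δ ∩ B₀ := by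
      rw [show g • (Δ ∩ B) = g • Δ ∩ g • B from
        Finset.image_inter _ _ (MulAction.injective g), hΔinv g hgα, hgB]
    rw [← this, Finset.card_smul_finset]
  have hsum : ∑ B ∈ S, (Δ ∩ B).card = r * (Δ ∩ B₀).card := by
    rw [Finset.sum_congr rfl hconst, Finset.sum_const, smul_eq_mul, hScard]
  -- conclude
  have hdvd : r ∣ Δ.card * lam := by
    rw [← hdouble, hsum]; exact ⟨_, rfl⟩
  have hrΔ : r ∣ Δ.card :=
    (Nat.Coprime.dvd_of_dvd_mul_right hcop hdvd)
  have : Nat.card O = Δ.card := by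
    rw [Nat.card_eq_card_finite_toFinset O.toFinite]
    congr 1
    ext x
    simp only [hmemΔ, Set.Finite.mem_toFinset]
  rw [show (MulAction.orbit H β : Set P) = O from rfl] at *
  exact this ▸ hrΔ
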